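/- Let Γ be a connected simple graph on a finite vertex set and let x, y be two distinct vertices. Let Γ̃ be the graph obtained from Γ by interchanging x and y, i.e., for every vertex z ∉ {x, y}: z is adjacent to x in Γ̃ iff z is adjacent to y in Γ, and z is adjacent to y in Γ̃ iff z is adjacent to x in Γ; x is adjacent to y in Γ̃ iff x is adjacent to y in Γ; all adjacencies not involving x or y are unchanged. Then there exists a finite sequence of edge slides transforming Γ into Γ̃. -/

import Mathlib

open SimpleGraph Relation

/-- An edge slide: given distinct vertices `x, y, z` with `x ~ y`, `y ~ z` and `x ≁ z`,
slide the edge `xy` to `xz`. -/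
def EdgeSlide {V : Type*} (G G' : SimpleGraph V) : Prop :=
  ∃ x y z : V, x ≠ z ∧ G.Adj x y ∧ G.Adj y z ∧ ¬ G.Adj x z ∧
    G' = G.deleteEdges {s(x, y)} ⊔ SimpleGraph.fromEdgeSet {s(x, z)}

namespace Interchange

variable {V : Type*}

lemma slide_adj (G : SimpleGraph V) (x y z a b : V) :
    (G.deleteEdges {s(x, y)} ⊔ SimpleGraph.fromEdgeSet {s(x, z)}).Adj a b ↔
      (G.Adj a b ∧ ¬ s(a, b) = s(x, y)) ∨ (s(a, b) = s(x, z) ∧ a ≠ b) := by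
  simp [SimpleGraph.deleteEdges_adj, SimpleGraph.fromEdgeSet_adj]

lemma edgeSlide_symm : Symmetric (@EdgeSlide V) := by
  rintro G G' ⟨x, y, z, hxz, hxy, hyz, hnxz, rfl⟩
  refine ⟨x, z, y, hxy.ne, ?_, ?_, ?_, ?_⟩
  · rw [slide_adj]; exact Or.inr ⟨rfl, hxz⟩
  · rw [slide_adj]
    refine Or.inl ⟨hyz.symm, ?_⟩
    rw [Sym2.eq_iff]
    rintro (⟨rfl, -⟩ | ⟨rfl, -⟩)
    · exact hxz rfl
    · exact hyz.ne rfl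
  · rw [slide_adj]
    rintro (⟨-, h2⟩ | ⟨h1, -⟩)
    · exact h2 rfl
    · rw [Sym2.eq_iff] at h1
      rcases h1 with ⟨-, rfl⟩ | ⟨rfl, -⟩
      · exact hyz.ne rfl
      · exact hxz rfl
  · ext a b
    rw [slide_adj, slide_adj]
    constructor
    · intro h
      by_cases h1 : s(a, b) = s(x, y)
      · exact Or.inr ⟨h1, h.ne⟩
      · refine Or.inl ⟨Or.inl ⟨h, h1⟩, ?_⟩
        rw [Sym2.eq_iff]
        rintro (⟨rfl, rfl⟩ | ⟨rfl, rfl⟩)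
        · exact hnxz h
        · exact hnxz h.symm
    · rintro (⟨(⟨h, -⟩ | ⟨h1, -⟩), h2⟩ | ⟨h1, -⟩)
      · exact h
      · exact absurd h1 h2
      · rw [Sym2.eq_iff] at h1
        rcases h1 with ⟨rfl, rfl⟩ | ⟨rfl, rfl⟩
        · exact hxy
        · exact hxy.symm

/-- The intermediate graph: all edges from `x` to `x`-private neighbours moved to `y`. -/
def Mg (G : SimpleGraph V) (x y : V) : SimpleGraph V where
  Adj a b :=
    (G.Adj a b ∧ ¬(a = x ∧ ¬G.Adj y b ∧ b ≠ y) ∧ ¬(b = x ∧ ¬G.Adj y a ∧ a ≠ y))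
    ∨ (a = y ∧ G.Adj x b ∧ b ≠ y) ∨ (b = y ∧ G.Adj x a ∧ a ≠ y)
  symm := by
    constructor
    intro a b h
    rcases h with ⟨h1, h2, h3⟩ | h | h
    · exact Or.inl ⟨h1.symm, h3, h2⟩
    · exact Or.inr (Or.inr h)
    · exact Or.inr (Or.inl h)
  loopless := by
    constructor
    intro a h
    rcases h with ⟨h1, -⟩ | ⟨rfl, -, h3⟩ | ⟨rfl, -, h3⟩ <;> first | exact h1.ne rfl | exact h3 rfl

lemma mg_adj (G : SimpleGraph V) (x y a b : V) :
    (Mg G x y).Adj a b ↔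
    (G.Adj a b ∧ ¬(a = x ∧ ¬G.Adj y b ∧ b ≠ y) ∧ ¬(b = x ∧ ¬G.Adj y a ∧ a ≠ y))
    ∨ (a = y ∧ G.Adj x b ∧ b ≠ y) ∨ (b = y ∧ G.Adj x a ∧ a ≠ y) := Iff.rfl

lemma mg_eq_self (G : SimpleGraph V) (x y : V)
    (hA : ∀ w, G.Adj x w → w ≠ y → G.Adj y w) : Mg G x y = G := by
  ext a b
  rw [mg_adj]
  constructor
  · rintro (⟨h, -, -⟩ | ⟨rfl, h, hby⟩ | ⟨rfl, h, hay⟩)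
    · exact h
    · exact hA b h hby
    · exact (hA a h hay).symm
  · intro h
    refine Or.inl ⟨h, ?_, ?_⟩
    · rintro ⟨rfl, h2, h3⟩; exact h2 (hA b h h3)
    · rintro ⟨rfl, h2, h3⟩; exact h2 (hA a h.symm h3)

section Slide
variable (G : SimpleGraph V) (x y z : V)

lemma slide_adj' (a b : V) :
    (G.deleteEdges {s(z, x)} ⊔ SimpleGraph.fromEdgeSet {s(z, y)}).Adj a b ↔
    (G.Adj a b ∧ ¬((a = z ∧ b = x) ∨ (a = x ∧ b = z))) ∨
      (((a = z ∧ b = y) ∨ (a = y ∧ b = z)) ∧ a ≠ b) := by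
  rw [slide_adj]; simp [Sym2.eq_iff]

lemma mg_slide (hxy : G.Adj x y) (hxz : G.Adj x z) (hnyz : ¬G.Adj y z) (hzy : z ≠ y) :
    Mg (G.deleteEdges {s(z, x)} ⊔ SimpleGraph.fromEdgeSet {s(z, y)}) x y = Mg G x y := by
  have hzx : z ≠ x := fun h => hnyz (h ▸ hxy.symm)
  have hxy' : x ≠ y := hxy.ne
  have hzx' : G.Adj z x := hxz.symm
  have hyx : G.Adj y x := hxy.symm
  have hnzy : ¬G.Adj z y := fun h => hnyz h.symm
  ext a b
  rw [mg_adj, mg_adj]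
  rw [slide_adj', slide_adj', slide_adj', slide_adj', slide_adj']
  by_cases hax : a = x <;> by_cases hay : a = y <;> by_cases haz : a = z <;>
    by_cases hbx : b = x <;> by_cases hby : b = y <;> by_cases hbz : b = z <;>
    subst_vars <;> simp_all

end Slide

open scoped Classical in
noncomputable def Aset [Fintype V] (G : SimpleGraph V) (x y : V) : Finset V :=
  Finset.univ.filter fun w => G.Adj x w ∧ ¬G.Adj y w ∧ w ≠ y

open scoped Classical in
lemma mem_Aset [Fintype V] (G : SimpleGraph V) (x y w : V) :
    w ∈ Aset G x y ↔ G.Adj x w ∧ ¬G.Adj y w ∧ w ≠ y := by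
  simp [Aset]

lemma aset_slide [Fintype V] [DecidableEq V] (G : SimpleGraph V) (x y z : V)
    (hxy : G.Adj x y) (hxz : G.Adj x z) (hnyz : ¬G.Adj y z) (hzy : z ≠ y) :
    Aset (G.deleteEdges {s(z, x)} ⊔ SimpleGraph.fromEdgeSet {s(z, y)}) x y
      = (Aset G x y).erase z := by
  have hzx : z ≠ x := fun h => hnyz (h ▸ hxy.symm)
  have hxy' : x ≠ y := hxy.ne
  ext w
  rw [Finset.mem_erase, mem_Aset, mem_Aset, slide_adj', slide_adj']
  constructor
  · rintro ⟨h1, h2, h3⟩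
    rcases h1 with ⟨h1, h1'⟩ | ⟨(⟨rfl, rfl⟩ | ⟨rfl, rfl⟩), -⟩
    · have hwz : w ≠ z := by rintro rfl; exact h1' (Or.inr ⟨rfl, rfl⟩)
      refine ⟨hwz, h1, fun hyw => h2 (Or.inl ⟨hyw, ?_⟩), h3⟩
      rintro (⟨rfl, rfl⟩ | ⟨rfl, rfl⟩)
      · exact hzy rfl
      · exact hwz rfl
    · exact absurd rfl h3
    · exact absurd rfl hxy'
  · rintro ⟨hwz, h1, h2, h3⟩
    refine ⟨Or.inl ⟨h1, ?_⟩, ?_, h3⟩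
    · rintro (⟨rfl, -⟩ | ⟨-, rfl⟩)
      · exact hzx rfl
      · exact hwz rfl
    · rintro (⟨h4, -⟩ | ⟨(⟨rfl, -⟩ | ⟨-, rfl⟩), -⟩)
      · exact h2 h4
      · exact hzy rfl
      · exact hwz rfl

lemma mg_of_empty [Fintype V] (G : SimpleGraph V) (x y : V)
    (hA : Aset G x y = ∅) : Mg G x y = G := by
  refine mg_eq_self G x y fun w h1 h2 => ?_
  by_contra h3
  exact (Finset.eq_empty_iff_forall_notMem.mp hA w) ((mem_Aset _ _ _ _).mpr ⟨h1, h3, h2⟩)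

lemma phase1 [Fintype V] [DecidableEq V] :
    ∀ (n : ℕ) (G : SimpleGraph V) (x y : V), G.Adj x y → (Aset G x y).card ≤ n →
      Relation.ReflTransGen EdgeSlide G (Mg G x y) := by
  intro n
  induction n with
  | zero =>
    intro G x y hxy hcard
    rw [mg_of_empty G x y (Finset.card_eq_zero.mp (Nat.le_zero.mp hcard))]
  | succ n ih =>
    intro G x y hxy hcard
    by_cases hA : Aset G x y = ∅
    · rw [mg_of_empty G x y hA]
    · obtain ⟨z, hz⟩ := Finset.nonempty_iff_ne_empty.mpr hA
      have hzmem := hz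
      rw [mem_Aset] at hz
      obtain ⟨hxz, hnyz, hzy⟩ := hz
      have hstep : EdgeSlide G (G.deleteEdges {s(z, x)} ⊔ SimpleGraph.fromEdgeSet {s(z, y)}) :=
        ⟨z, x, y, hzy, hxz.symm, hxy, fun h => hnyz h.symm, rfl⟩
      have hxy' : (G.deleteEdges {s(z, x)} ⊔ SimpleGraph.fromEdgeSet {s(z, y)}).Adj x y := by
        rw [slide_adj']
        refine Or.inl ⟨hxy, ?_⟩
        rintro (⟨rfl, -⟩ | ⟨-, rfl⟩)
        · exact hxz.ne rfl
        · exact hzy rfl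
      have hcard' : (Aset (G.deleteEdges {s(z, x)} ⊔ SimpleGraph.fromEdgeSet {s(z, y)}) x y).card ≤ n := by
        rw [aset_slide G x y z hxy hxz hnyz hzy, Finset.card_erase_of_mem hzmem]
        omega
      have h2 := ih _ x y hxy' hcard'
      rw [mg_slide G x y z hxy hxz hnyz hzy] at h2
      exact Relation.ReflTransGen.head hstep h2

lemma mg_comap [DecidableEq V] (G : SimpleGraph V) (x y : V) (hxy : x ≠ y) :
    Mg (G.comap (Equiv.swap x y)) x y = Mg G x y := by
  ext a b
  rw [mg_adj, mg_adj]
  simp only [SimpleGraph.comap_adj, Equiv.swap_apply_def]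
  by_cases hax : a = x <;> by_cases hay : a = y <;> by_cases hbx : b = x <;> by_cases hby : b = y <;>
    subst_vars <;> simp_all [SimpleGraph.adj_comm] <;> tauto

lemma adj_case [Fintype V] [DecidableEq V] (G : SimpleGraph V) (x y : V) (h : G.Adj x y) :
    Relation.ReflTransGen EdgeSlide G (G.comap (Equiv.swap x y)) := by
  have h1 := phase1 (Aset G x y).card G x y h le_rfl
  have hσ : (G.comap (Equiv.swap x y)).Adj x y := by
    simp only [SimpleGraph.comap_adj, Equiv.swap_apply_left, Equiv.swap_apply_right]
    exact h.symm
  have h2 := phase1 (Aset (G.comap (Equiv.swap x y)) x y).card _ x y hσ le_rfl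
  rw [mg_comap G x y h.ne] at h2
  exact h1.trans (by haveI : Std.Symm (@EdgeSlide V) := ⟨edgeSlide_symm⟩; exact Std.Symm.symm _ _ h2)

lemma main_aux [Fintype V] [DecidableEq V] :
    ∀ (n : ℕ) (G : SimpleGraph V) (x y : V), x ≠ y → ∀ p : G.Walk x y, p.length ≤ n →
      Relation.ReflTransGen EdgeSlide G (G.comap (Equiv.swap x y)) := by
  intro n
  induction n with
  | zero =>
    intro G x y hxy p hp
    exact absurd (p.eq_of_length_eq_zero (Nat.le_zero.mp hp)) hxy
  | succ n ih =>
    intro G x y hxy p hp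
    cases p with
    | nil => exact absurd rfl hxy
    | cons h q =>
      rename_i w
      by_cases hwy : w = y
      · subst hwy
        exact adj_case G _ _ h
      · have hwx : w ≠ x := h.ne'
        have s1 := adj_case G x w h
        let τ := Equiv.swap x w
        let φ : G →g G.comap ⇑τ :=
          ⟨⇑τ, fun {a b} hab => by
            simp only [SimpleGraph.comap_adj, Equiv.swap_apply_self, τ]
            exact hab⟩
        have hτw : τ w = x := Equiv.swap_apply_right x w
        have hτy : τ y = y := Equiv.swap_apply_of_ne_of_ne (Ne.symm hxy) (Ne.symm hwy)
        let q' : (G.comap ⇑τ).Walk x y := ((q.map φ).copy hτw hτy)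
        have hq'len : q'.length ≤ n := by
          have : q.length + 1 ≤ n + 1 := hp
          simpa [q', SimpleGraph.Walk.length_copy, SimpleGraph.Walk.length_map] using
            Nat.le_of_succ_le_succ this
        have s2 := ih (G.comap ⇑τ) x y hxy q' hq'len
        have hadj : ((G.comap ⇑τ).comap ⇑(Equiv.swap x y)).Adj y w := by
          show G.Adj (Equiv.swap x w (Equiv.swap x y y)) (Equiv.swap x w (Equiv.swap x y w))
          rw [Equiv.swap_apply_right x y, Equiv.swap_apply_of_ne_of_ne hwx hwy,
            Equiv.swap_apply_left x w, Equiv.swap_apply_right x w]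
          exact h.symm
        have s3 := adj_case ((G.comap ⇑τ).comap ⇑(Equiv.swap x y)) y w hadj
        have hfinal : (((G.comap ⇑τ).comap ⇑(Equiv.swap x y)).comap ⇑(Equiv.swap y w))
            = G.comap ⇑(Equiv.swap x y) := by
          have key : ∀ v, τ (Equiv.swap x y (Equiv.swap y w v)) = Equiv.swap x y v := by
            intro v
            by_cases h1 : v = x <;> by_cases h2 : v = y <;> by_cases h3 : v = w <;>
              subst_vars <;> simp_all [τ, Equiv.swap_apply_def]
          ext a b
          simp only [SimpleGraph.comap_adj, key]
        rw [hfinal] at s3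
        exact s1.trans (s2.trans s3)

end Interchange

/-- Interchanging two vertices (the graph obtained by pulling back the adjacency relation
along the transposition of `x` and `y`) can be achieved by a combination of edge slides. -/
theorem interchange_by_slides {V : Type*} [Fintype V] [DecidableEq V] (G : SimpleGraph V)
    (hc : G.Connected) (x y : V) (hxy : x ≠ y) :
    Relation.ReflTransGen EdgeSlide G (G.comap (Equiv.swap x y)) := by
  obtain ⟨p⟩ := hc.preconnected x y
  exact Interchange.main_aux p.length G x y hxy p le_rfl
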